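/- Let f : ℝ → ℝ be a bounded measurable function, let σ > 0, and for μ ∈ ℝ let N(μ, σ²) denote the Gaussian measure on ℝ with mean μ and variance σ². Then the map μ ↦ E_{z ~ N(μ,σ²)}[f(z)] is differentiable, and its derivative equals E_{z ~ N(μ,σ²)}[ f(z) · (z − μ)/σ² ]; that is, the gradient of the expected cost with respect to the mean parameter equals the expectation of the cost times the score function ∇_μ log of the Gaussian density. -/

import Mathlib

open MeasureTheory ProbabilityTheory Real NNReal ENNReal

lemma integral_gaussianReal_eq (g : ℝ → ℝ) (m : ℝ) {v : ℝ≥0} (hv : v ≠ 0) :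
    ∫ z, g z ∂(gaussianReal m v) = ∫ z, g z * gaussianPDFReal m v z := by
  rw [gaussianReal_of_var_ne_zero _ hv]
  have h : ∫ z, g z ∂(volume.withDensity fun x => ((gaussianPDFReal m v x).toNNReal : ℝ≥0∞))
      = ∫ z, ((gaussianPDFReal m v z).toNNReal : ℝ≥0) • g z :=
    integral_withDensity_eq_integral_smul ((measurable_gaussianPDFReal m v).real_toNNReal) g
  rw [show gaussianPDF m v = fun x => ((gaussianPDFReal m v x).toNNReal : ℝ≥0∞) from rfl, h]
  refine integral_congr_ae (Filter.Eventually.of_forall fun z => ?_)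
  show ((gaussianPDFReal m v z).toNNReal : ℝ≥0) • g z = g z * gaussianPDFReal m v z
  rw [NNReal.smul_def, smul_eq_mul, Real.coe_toNNReal _ (gaussianPDFReal_nonneg m v z), mul_comm]

lemma hasDerivAt_gaussianPDFReal {v : ℝ≥0} (hv : 0 < (v : ℝ)) (z m : ℝ) :
    HasDerivAt (fun m => gaussianPDFReal m v z)
      (gaussianPDFReal m v z * ((z - m) / v)) m := by
  have h1 : HasDerivAt (fun m : ℝ => -(z - m) ^ 2 / (2 * v)) ((z - m) / v) m := by
    have h2 : HasDerivAt (fun m : ℝ => (z - m)) (-1) m := by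
      simpa using (hasDerivAt_id m).const_sub z
    have h3 := ((h2.pow 2).neg).div_const (2 * (v : ℝ))
    refine h3.congr_deriv ?_
    field_simp
    ring
  have h4 := (h1.exp).const_mul (√(2 * π * v))⁻¹
  simp only [gaussianPDFReal]
  refine h4.congr_deriv ?_
  ring

/-- Score-function (likelihood-ratio) identity for the mean of a Gaussian: for a bounded
measurable `f` and `σ > 0`, the map `μ ↦ E_{z ~ N(μ, σ²)}[f z]` is differentiable, with
derivative `E_{z ~ N(μ, σ²)}[f z · (z - μ)/σ²]`, the expectation of `f` times the score
`∇_μ log` of the Gaussian density. -/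
theorem gaussian_score_gradient_mean
    (f : ℝ → ℝ) (hf : Measurable f) (hbdd : ∃ M : ℝ, ∀ z, |f z| ≤ M)
    (σ : ℝ≥0) (hσ : 0 < σ) (μ : ℝ) :
    HasDerivAt (fun m : ℝ => ∫ z, f z ∂(gaussianReal m (σ ^ 2)))
      (∫ z, f z * ((z - μ) / (σ : ℝ) ^ 2) ∂(gaussianReal μ (σ ^ 2))) μ := by
  obtain ⟨M, hM⟩ := hbdd
  have hM0 : 0 ≤ M := le_trans (abs_nonneg _) (hM 0)
  set v : ℝ≥0 := σ ^ 2 with hv_def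
  have hv_ne : v ≠ 0 := by positivity
  have hv : (0 : ℝ) < (v : ℝ) := by positivity
  have hvcast : ((v : ℝ≥0) : ℝ) = (σ : ℝ) ^ 2 := by simp [hv_def]
  -- constants
  set c0 : ℝ := (√(2 * π * v))⁻¹ with hc0_def
  have hc0 : 0 < c0 := by
    rw [hc0_def]
    have : 0 < 2 * π * (v : ℝ) := by positivity
    positivity
  set K : ℝ := c0 * rexp (1 / v) * M / v with hK_def
  set bound : ℝ → ℝ := fun z => K * ((|z - μ| + 1) * rexp (-(1 / (4 * v)) * (z - μ) ^ 2))
    with hbound_def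
  set F : ℝ → ℝ → ℝ := fun m z => f z * gaussianPDFReal m v z with hF_def
  set F' : ℝ → ℝ → ℝ := fun m z => f z * (gaussianPDFReal m v z * ((z - m) / v)) with hF'_def
  have hmeasF : ∀ m, AEStronglyMeasurable (F m) volume := fun m =>
    (hf.mul (measurable_gaussianPDFReal m v)).aestronglyMeasurable
  have hintF : ∀ m, Integrable (F m) volume := fun m =>
    (integrable_gaussianPDFReal m v).bdd_mul hf.aestronglyMeasurable
      (ae_of_all _ fun z => by simpa using hM z)
  have hmeasF' : AEStronglyMeasurable (F' μ) volume := by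
    apply Measurable.aestronglyMeasurable
    exact hf.mul ((measurable_gaussianPDFReal μ v).mul (by fun_prop))
  -- the pointwise derivative
  have hderiv : ∀ z : ℝ, ∀ m : ℝ, HasDerivAt (fun m => F m z) (F' m z) m := fun z m =>
    (hasDerivAt_gaussianPDFReal hv z m).const_mul (f z)
  -- bound
  have hbound : ∀ z : ℝ, ∀ m ∈ Metric.ball μ 1, ‖F' m z‖ ≤ bound z := by
    intro z m hm
    have ht : |m - μ| ≤ 1 := le_of_lt (by simpa [Real.dist_eq] using hm)
    have hzm : |z - m| ≤ |z - μ| + 1 := by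
      have : z - m = (z - μ) - (m - μ) := by ring
      rw [this]
      exact le_trans (abs_sub _ _) (by linarith)
    have hexp : rexp (-(z - m) ^ 2 / (2 * v)) ≤ rexp (1 / v) * rexp (-(1 / (4 * v)) * (z - μ) ^ 2) := by
      rw [← Real.exp_add, Real.exp_le_exp]
      have habs : -1 ≤ m - μ ∧ m - μ ≤ 1 := abs_le.1 ht
      have key : (z - μ) ^ 2 ≤ 4 + 2 * (z - m) ^ 2 := by
        nlinarith [sq_nonneg ((z - μ) - 2 * (m - μ)), habs.1, habs.2]
      have heq : 1 / (v : ℝ) + -(1 / (4 * v)) * (z - μ) ^ 2 - (-(z - m) ^ 2 / (2 * v))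
          = (4 + 2 * (z - m) ^ 2 - (z - μ) ^ 2) / (4 * v) := by
        field_simp
        ring
      rw [← sub_nonneg, heq]
      exact div_nonneg (by linarith) (by positivity)
    have hpdf : gaussianPDFReal m v z ≤ c0 * (rexp (1 / v) * rexp (-(1 / (4 * v)) * (z - μ) ^ 2)) := by
      rw [gaussianPDFReal]
      exact mul_le_mul_of_nonneg_left hexp (le_of_lt hc0)
    have hpdf0 : 0 ≤ gaussianPDFReal m v z := gaussianPDFReal_nonneg m v z
    calc ‖F' m z‖ = |f z| * (gaussianPDFReal m v z * (|z - m| / v)) := by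
          rw [hF'_def]
          simp only [norm_mul, Real.norm_eq_abs, abs_mul, abs_div]
          rw [abs_of_nonneg hpdf0, abs_of_pos hv]
      _ ≤ M * ((c0 * (rexp (1 / v) * rexp (-(1 / (4 * v)) * (z - μ) ^ 2))) * ((|z - μ| + 1) / v)) := by
          apply mul_le_mul (hM z) _ (by positivity) hM0
          apply mul_le_mul hpdf (by gcongr) (by positivity) (by positivity)
      _ = bound z := by rw [hbound_def, hK_def]; ring
  -- integrability of the bound
  have hbound_int : Integrable bound volume := by
    have hb : (0 : ℝ) < 1 / (4 * v) := by positivity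
    have h1 : Integrable (fun x : ℝ => |x| * rexp (-(1 / (4 * v)) * x ^ 2)) volume := by
      have := (integrable_mul_exp_neg_mul_sq hb).abs
      refine this.congr (ae_of_all _ fun x => ?_)
      simp only []
      rw [abs_mul, abs_of_pos (Real.exp_pos _)]
    have h2 : Integrable (fun x : ℝ => (|x| + 1) * rexp (-(1 / (4 * v)) * x ^ 2)) volume := by
      have := h1.add (integrable_exp_neg_mul_sq hb)
      refine this.congr (ae_of_all _ fun x => ?_)
      simp only [Pi.add_apply]
      ring
    have h3 := (h2.const_mul K).comp_sub_right μ
    exact h3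
  have key := hasDerivAt_integral_of_dominated_loc_of_deriv_le (F := F) (F' := fun m z => F' m z)
    (x₀ := μ) (s := Metric.ball μ 1) (Metric.ball_mem_nhds μ one_pos)
    (Filter.Eventually.of_forall fun m => hmeasF m) (hintF μ) hmeasF'
    (ae_of_all _ fun z m hm => hbound z m hm) hbound_int
    (ae_of_all _ fun z m _ => hderiv z m)
  have h1 : (fun m : ℝ => ∫ z, f z ∂(gaussianReal m (σ ^ 2))) = fun m => ∫ z, F m z := by
    ext m
    rw [integral_gaussianReal_eq f m hv_ne]
  have h2 : (∫ z, f z * ((z - μ) / (σ : ℝ) ^ 2) ∂(gaussianReal μ (σ ^ 2)))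
      = ∫ z, F' μ z := by
    rw [integral_gaussianReal_eq _ μ hv_ne]
    congr 1
    ext z
    rw [hF'_def, hvcast]
    ring
  rw [h1, h2]
  exact key.2
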